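/- Twisted 2-cocycle compatibility under partial gauge transformation: with the notation and hypotheses of the previous statement (descent datum (x,g,a), partial gauge transformation (f,c) to (x',g'), and a' defined by a' := Ad(f_{(0)})(c_{(0,2)}⁻¹ ∘ a ∘ Ad(g_{(0,1)}⁻¹)(c_{(1,2)}) ∘ c_{(0,1)})), the triple (x',g',a') satisfies the twisted 2-cocycle condition: (a'_{(0,1,3)})⁻¹ ∘ a'_{(0,2,3)} ∘ a'_{(0,1,2)} = Ad((g'_{(0,1)})⁻¹)(a'_{(1,2,3)}) in G³₂(x'_{(0)}). -/

import Mathlib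

/-! Crossed groupoids (= crossed modules over groupoids), following Yekutieli,
"Combinatorial descent data for gerbes". -/

structure CrossedGroupoid : Type 1 where
  Obj : Type
  Hom : Obj → Obj → Type
  id : ∀ x, Hom x x
  comp : ∀ {x y z}, Hom y z → Hom x y → Hom x z
  inv : ∀ {x y}, Hom x y → Hom y x
  comp_assoc : ∀ {x y z w} (h : Hom z w) (g : Hom y z) (f : Hom x y),
    comp (comp h g) f = comp h (comp g f)
  id_comp : ∀ {x y} (f : Hom x y), comp (id y) f = f
  comp_id : ∀ {x y} (f : Hom x y), comp f (id x) = f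
  inv_comp : ∀ {x y} (f : Hom x y), comp (inv f) f = id x
  comp_inv : ∀ {x y} (f : Hom x y), comp f (inv f) = id y
  -- the totally disconnected groupoid 𝒢₂, i.e. a family of groups
  G2 : Obj → Type
  mul : ∀ {x}, G2 x → G2 x → G2 x
  one : ∀ x, G2 x
  inv2 : ∀ {x}, G2 x → G2 x
  mul_assoc : ∀ {x} (a b c : G2 x), mul (mul a b) c = mul a (mul b c)
  one_mul : ∀ {x} (a : G2 x), mul (one x) a = a
  mul_one : ∀ {x} (a : G2 x), mul a (one x) = a
  inv2_mul : ∀ {x} (a : G2 x), mul (inv2 a) a = one x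
  -- the twisting: an action of 𝒢₁ on 𝒢₂
  Ad : ∀ {x y}, Hom x y → G2 x → G2 y
  Ad_mul : ∀ {x y} (g : Hom x y) (a b : G2 x), Ad g (mul a b) = mul (Ad g a) (Ad g b)
  Ad_one : ∀ {x y} (g : Hom x y), Ad g (one x) = one y
  Ad_id : ∀ {x} (a : G2 x), Ad (id x) a = a
  Ad_comp : ∀ {x y z} (h : Hom y z) (g : Hom x y) (a : G2 x),
    Ad (comp h g) a = Ad h (Ad g a)
  -- the feedback D : 𝒢₂ → 𝒢₁, identity on objects
  D : ∀ {x}, G2 x → Hom x x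
  D_mul : ∀ {x} (a b : G2 x), D (mul a b) = comp (D a) (D b)
  D_one : ∀ x, D (one x) = id x
  -- equivariance of the feedback
  D_Ad : ∀ {x y} (g : Hom x y) (a : G2 x), D (Ad g a) = comp (comp g (D a)) (inv g)
  -- Peiffer condition
  peiffer : ∀ {x} (a b : G2 x), Ad (D a) b = mul (mul a b) (inv2 a)

namespace CrossedGroupoid

/-- Transport of 1-morphisms along equalities of objects. -/
def hcast (G : CrossedGroupoid) {x x' y y' : G.Obj} (ex : x = x') (ey : y = y')
    (f : G.Hom x y) : G.Hom x' y' := ey ▸ ex ▸ f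

/-- Transport of 2-morphisms along an equality of objects. -/
def cast2 (G : CrossedGroupoid) {x x' : G.Obj} (e : x = x') (a : G.G2 x) : G.G2 x' := e ▸ a

/-- The relation "isomorphic in 𝒢₁". -/
def pi0Rel (G : CrossedGroupoid) : G.Obj → G.Obj → Prop := fun x y => Nonempty (G.Hom x y)

/-- π₀ of a crossed groupoid: isomorphism classes of objects of 𝒢₁. -/
def pi0 (G : CrossedGroupoid) : Type := Quot G.pi0Rel

/-- The right action relation on a hom-set: g' = g ∘ D(a). -/
def homRel (G : CrossedGroupoid) (x x' : G.Obj) : G.Hom x x' → G.Hom x x' → Prop :=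
  fun g g' => ∃ a : G.G2 x, g' = G.comp g (G.D a)

/-- π₁(G, x, x') := 𝒢₁(x,x') / 𝒢₂(x). -/
def pi1' (G : CrossedGroupoid) (x x' : G.Obj) : Type := Quot (G.homRel x x')

/-- π₁(G, x) = Coker(D : 𝒢₂(x) → 𝒢₁(x)) as a quotient set. -/
def pi1 (G : CrossedGroupoid) (x : G.Obj) : Type := G.pi1' x x

/-- π₂(G, x) = Ker(D : 𝒢₂(x) → 𝒢₁(x)). -/
def pi2 (G : CrossedGroupoid) (x : G.Obj) : Type := {a : G.G2 x // G.D a = G.id x}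

end CrossedGroupoid

/-- A morphism of crossed groupoids. -/
structure CrossedGroupoidHom (G H : CrossedGroupoid) where
  obj : G.Obj → H.Obj
  map1 : ∀ {x y : G.Obj}, G.Hom x y → H.Hom (obj x) (obj y)
  map2 : ∀ {x : G.Obj}, G.G2 x → H.G2 (obj x)
  map1_comp : ∀ {x y z : G.Obj} (g : G.Hom y z) (f : G.Hom x y),
    map1 (G.comp g f) = H.comp (map1 g) (map1 f)
  map1_id : ∀ x : G.Obj, map1 (G.id x) = H.id (obj x)
  map2_mul : ∀ {x : G.Obj} (a b : G.G2 x), map2 (G.mul a b) = H.mul (map2 a) (map2 b)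
  map_D : ∀ {x : G.Obj} (a : G.G2 x), map1 (G.D a) = H.D (map2 a)
  map_Ad : ∀ {x y : G.Obj} (g : G.Hom x y) (a : G.G2 x),
    map2 (G.Ad g a) = H.Ad (map1 g) (map2 a)

namespace CrossedGroupoidHom

/-- Identity morphism of crossed groupoids. -/
def id (G : CrossedGroupoid) : CrossedGroupoidHom G G where
  obj := fun x => x
  map1 := fun f => f
  map2 := fun a => a
  map1_comp := fun _ _ => rfl
  map1_id := fun _ => rfl
  map2_mul := fun _ _ => rfl
  map_D := fun _ => rfl
  map_Ad := fun _ _ => rfl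

/-- Composition of morphisms of crossed groupoids. -/
def comp {G H K : CrossedGroupoid} (F₂ : CrossedGroupoidHom H K) (F₁ : CrossedGroupoidHom G H) :
    CrossedGroupoidHom G K where
  obj := fun x => F₂.obj (F₁.obj x)
  map1 := fun f => F₂.map1 (F₁.map1 f)
  map2 := fun a => F₂.map2 (F₁.map2 a)
  map1_comp := fun g f => by (try dsimp only); rw [F₁.map1_comp, F₂.map1_comp]
  map1_id := fun x => by (try dsimp only); rw [F₁.map1_id, F₂.map1_id]
  map2_mul := fun a b => by (try dsimp only); rw [F₁.map2_mul, F₂.map2_mul]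
  map_D := fun a => by (try dsimp only); rw [F₁.map_D, F₂.map_D]
  map_Ad := fun g a => by (try dsimp only); rw [F₁.map_Ad, F₂.map_Ad]

variable {G H : CrossedGroupoid}

/-- The induced map on π₀. -/
def pi0map (F : CrossedGroupoidHom G H) : G.pi0 → H.pi0 :=
  Quot.map F.obj (fun _ _ h => ⟨F.map1 h.some⟩)

/-- The induced map on π₁(−, x, x'). -/
def pi1'map (F : CrossedGroupoidHom G H) (x x' : G.Obj) :
    G.pi1' x x' → H.pi1' (F.obj x) (F.obj x') :=
  Quot.map F.map1 (by
    rintro g g' ⟨a, rfl⟩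
    exact ⟨F.map2 a, by rw [F.map1_comp, F.map_D]⟩)

/-- The induced map on π₁(−, x). -/
def pi1map (F : CrossedGroupoidHom G H) (x : G.Obj) : G.pi1 x → H.pi1 (F.obj x) :=
  F.pi1'map x x

/-- The induced map on π₂(−, x). -/
def pi2map (F : CrossedGroupoidHom G H) (x : G.Obj) : G.pi2 x → H.pi2 (F.obj x) :=
  fun a => ⟨F.map2 a.1, by rw [← F.map_D, a.2, F.map1_id]⟩

/-- A weak equivalence of crossed groupoids: bijective on π₀, π₁ and π₂. -/
def IsWeakEquiv (F : CrossedGroupoidHom G H) : Prop :=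
  Function.Bijective F.pi0map ∧ (∀ x, Function.Bijective (F.pi1map x)) ∧
    (∀ x, Function.Bijective (F.pi2map x))

end CrossedGroupoidHom

/-! ### Combinatorics of the simplex category -/

/-- The vertex (i) of Δ^q, as a monotone map Δ⁰ → Δ^q. -/
def vtxMap {q : ℕ} (i : Fin (q + 1)) : Fin 1 →o Fin (q + 1) :=
  ⟨fun _ => i, fun _ _ _ => le_rfl⟩

/-- The edge (i,j) of Δ^q, as a monotone map Δ¹ → Δ^q. -/
def edgeMap {q : ℕ} (i j : Fin (q + 1)) (h : i ≤ j) : Fin 2 →o Fin (q + 1) :=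
  ⟨fun k => if (k : ℕ) = 0 then i else j, by
    intro a b hab
    have hab' : (a : ℕ) ≤ (b : ℕ) := hab
    show (if (a : ℕ) = 0 then i else j) ≤ (if (b : ℕ) = 0 then i else j)
    by_cases ha : (a : ℕ) = 0
    · by_cases hb : (b : ℕ) = 0
      · rw [if_pos ha, if_pos hb]
      · rw [if_pos ha, if_neg hb]; exact h
    · have hb : ¬ (b : ℕ) = 0 := fun hb0 => ha (Nat.le_zero.mp (hb0 ▸ hab'))
      rw [if_neg ha, if_neg hb]⟩

/-- The triangle (i,j,k) of Δ^q, as a monotone map Δ² → Δ^q. -/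
def triMap {q : ℕ} (i j k : Fin (q + 1)) (hij : i ≤ j) (hjk : j ≤ k) :
    Fin 3 →o Fin (q + 1) :=
  ⟨fun m => if (m : ℕ) = 0 then i else if (m : ℕ) = 1 then j else k, by
    intro a b hab
    have hab' : (a : ℕ) ≤ (b : ℕ) := hab
    show (if (a : ℕ) = 0 then i else if (a : ℕ) = 1 then j else k) ≤
      (if (b : ℕ) = 0 then i else if (b : ℕ) = 1 then j else k)
    by_cases ha0 : (a : ℕ) = 0
    · by_cases hb0 : (b : ℕ) = 0
      · rw [if_pos ha0, if_pos hb0]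
      · by_cases hb1 : (b : ℕ) = 1
        · rw [if_pos ha0, if_neg hb0, if_pos hb1]; exact hij
        · rw [if_pos ha0, if_neg hb0, if_neg hb1]; exact hij.trans hjk
    · by_cases ha1 : (a : ℕ) = 1
      · have hb0 : ¬ (b : ℕ) = 0 := by omega
        by_cases hb1 : (b : ℕ) = 1
        · rw [if_neg ha0, if_pos ha1, if_neg hb0, if_pos hb1]
        · rw [if_neg ha0, if_pos ha1, if_neg hb0, if_neg hb1]; exact hjk
      · have hb0 : ¬ (b : ℕ) = 0 := by omega
        have hb1 : ¬ (b : ℕ) = 1 := by omega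
        rw [if_neg ha0, if_neg ha1, if_neg hb0, if_neg hb1]⟩

theorem comp_vtxMap {p q : ℕ} (α : Fin (p + 1) →o Fin (q + 1)) (i : Fin (p + 1)) :
    α.comp (vtxMap i) = vtxMap (α i) := rfl

/-! ### Cosimplicial crossed groupoids -/

/-- A cosimplicial crossed groupoid: a functor Δ → CrGrpd. -/
structure CosimplicialCrossedGroupoid : Type 1 where
  obj : ℕ → CrossedGroupoid
  map : ∀ {p q : ℕ}, (Fin (p + 1) →o Fin (q + 1)) → CrossedGroupoidHom (obj p) (obj q)
  map_id : ∀ p, map (OrderHom.id : Fin (p + 1) →o Fin (p + 1)) = CrossedGroupoidHom.id (obj p)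
  map_comp : ∀ {p q r : ℕ} (β : Fin (q + 1) →o Fin (r + 1)) (α : Fin (p + 1) →o Fin (q + 1)),
    map (β.comp α) = (map β).comp (map α)

namespace CosimplicialCrossedGroupoid

variable (G : CosimplicialCrossedGroupoid)

theorem obj_comp {p q r : ℕ} (β : Fin (q + 1) →o Fin (r + 1)) (α : Fin (p + 1) →o Fin (q + 1))
    (x : (G.obj p).Obj) :
    (G.map β).obj ((G.map α).obj x) = (G.map (β.comp α)).obj x := by
  rw [G.map_comp]; rfl

/-- The object x of G⁰ pushed to the vertex (i) of Δ^q. -/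
def X (x : (G.obj 0).Obj) (q : ℕ) (i : Fin (q + 1)) : (G.obj q).Obj :=
  (G.map (vtxMap i)).obj x

theorem X_push (x : (G.obj 0).Obj) {p q : ℕ} (α : Fin (p + 1) →o Fin (q + 1))
    (i : Fin (p + 1)) : (G.map α).obj (G.X x p i) = G.X x q (α i) := by
  unfold X
  rw [obj_comp, comp_vtxMap]

/-- Pushing a 1-morphism between vertex objects along α. -/
def push1 {x : (G.obj 0).Obj} {p q : ℕ} (α : Fin (p + 1) →o Fin (q + 1))
    {i j : Fin (p + 1)} (g : (G.obj p).Hom (G.X x p i) (G.X x p j)) :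
    (G.obj q).Hom (G.X x q (α i)) (G.X x q (α j)) :=
  (G.obj q).hcast (G.X_push x α i) (G.X_push x α j) ((G.map α).map1 g)

/-- Pushing a 2-morphism at a vertex object along α. -/
def push2 {x : (G.obj 0).Obj} {p q : ℕ} (α : Fin (p + 1) →o Fin (q + 1))
    {i : Fin (p + 1)} (a : (G.obj p).G2 (G.X x p i)) :
    (G.obj q).G2 (G.X x q (α i)) :=
  (G.obj q).cast2 (G.X_push x α i) ((G.map α).map2 a)

/-- Yekutieli's combinatorial descent conditions (Definition 1.5):
the failure-of-1-cocycle condition and the twisted 2-cocycle condition. -/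
def IsDescent (x : (G.obj 0).Obj)
    (g : (G.obj 1).Hom (G.X x 1 0) (G.X x 1 1))
    (a : (G.obj 2).G2 (G.X x 2 0)) : Prop :=
  ((G.obj 2).comp ((G.obj 2).comp ((G.obj 2).inv (G.push1 (edgeMap 0 2 (by decide)) g))
      (G.push1 (edgeMap 1 2 (by decide)) g)) (G.push1 (edgeMap 0 1 (by decide)) g)
    = (G.obj 2).D a)
  ∧
  ((G.obj 3).mul ((G.obj 3).mul
        ((G.obj 3).inv2 (G.push2 (triMap 0 1 3 (by decide) (by decide)) a))
        (G.push2 (triMap 0 2 3 (by decide) (by decide)) a))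
      (G.push2 (triMap 0 1 2 (by decide) (by decide)) a)
    = (G.obj 3).Ad ((G.obj 3).inv (G.push1 (edgeMap 0 1 (by decide)) g))
        (G.push2 (triMap 1 2 3 (by decide) (by decide)) a))

/-- A combinatorial descent datum (Definition 1.5). -/
structure Desc (G : CosimplicialCrossedGroupoid) where
  x : (G.obj 0).Obj
  g : (G.obj 1).Hom (G.X x 1 0) (G.X x 1 1)
  a : (G.obj 2).G2 (G.X x 2 0)
  isDescent : G.IsDescent x g a

/-- The Yekutieli gauge-transformation conditions (Definition 1.7) for a pair (f, c). -/
def IsGauge (x : (G.obj 0).Obj) (g : (G.obj 1).Hom (G.X x 1 0) (G.X x 1 1))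
    (a : (G.obj 2).G2 (G.X x 2 0))
    (x' : (G.obj 0).Obj) (g' : (G.obj 1).Hom (G.X x' 1 0) (G.X x' 1 1))
    (a' : (G.obj 2).G2 (G.X x' 2 0))
    (f : (G.obj 0).Hom x x') (c : (G.obj 1).G2 (G.X x 1 0)) : Prop :=
  (g' = (G.obj 1).comp ((G.obj 1).comp ((G.obj 1).comp
      ((G.map (vtxMap (1 : Fin 2))).map1 f) g) ((G.obj 1).D c))
      ((G.obj 1).inv ((G.map (vtxMap (0 : Fin 2))).map1 f)))
  ∧
  (a' = (G.obj 2).Ad ((G.map (vtxMap (0 : Fin 3))).map1 f)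
    ((G.obj 2).mul ((G.obj 2).mul ((G.obj 2).mul
        ((G.obj 2).inv2 (G.push2 (edgeMap 0 2 (by decide)) c)) a)
        ((G.obj 2).Ad ((G.obj 2).inv (G.push1 (edgeMap 0 1 (by decide)) g))
          (G.push2 (edgeMap 1 2 (by decide)) c)))
      (G.push2 (edgeMap 0 1 (by decide)) c)))

/-- Gauge equivalence of descent data. -/
def GaugeEquiv (P Q : G.Desc) : Prop :=
  ∃ (f : (G.obj 0).Hom P.x Q.x) (c : (G.obj 1).G2 (G.X P.x 1 0)),
    G.IsGauge P.x P.g P.a Q.x Q.g Q.a f c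

/-- The explicit formula for the transported 2-morphism a'
(Definition 1.7(ii) / Lemma 1.9). -/
def transportA {x x' : (G.obj 0).Obj} (f : (G.obj 0).Hom x x')
    (g : (G.obj 1).Hom (G.X x 1 0) (G.X x 1 1))
    (a : (G.obj 2).G2 (G.X x 2 0)) (c : (G.obj 1).G2 (G.X x 1 0)) :
    (G.obj 2).G2 (G.X x' 2 0) :=
  (G.obj 2).Ad ((G.map (vtxMap (0 : Fin 3))).map1 f)
    ((G.obj 2).mul ((G.obj 2).mul ((G.obj 2).mul
        ((G.obj 2).inv2 (G.push2 (edgeMap 0 2 (by decide)) c)) a)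
        ((G.obj 2).Ad ((G.obj 2).inv (G.push1 (edgeMap 0 1 (by decide)) g))
          (G.push2 (edgeMap 1 2 (by decide)) c)))
      (G.push2 (edgeMap 0 1 (by decide)) c))

end CosimplicialCrossedGroupoid

/-- A morphism of cosimplicial crossed groupoids. -/
structure CosimplicialMor (G H : CosimplicialCrossedGroupoid) where
  app : ∀ p, CrossedGroupoidHom (G.obj p) (H.obj p)
  naturality : ∀ {p q : ℕ} (α : Fin (p + 1) →o Fin (q + 1)),
    (app q).comp (G.map α) = (H.map α).comp (app p)

namespace CosimplicialMor

variable {G H : CosimplicialCrossedGroupoid}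

theorem app_X (F : CosimplicialMor G H) (x : (G.obj 0).Obj) (q : ℕ) (i : Fin (q + 1)) :
    (F.app q).obj (G.X x q i) = H.X ((F.app 0).obj x) q i :=
  congrFun (congrArg CrossedGroupoidHom.obj (F.naturality (vtxMap i))) x

/-- Image of an object of G⁰. -/
def objD (F : CosimplicialMor G H) (x : (G.obj 0).Obj) : (H.obj 0).Obj := (F.app 0).obj x

/-- Image of a 1-morphism in dimension 0. -/
def mapF (F : CosimplicialMor G H) {x x' : (G.obj 0).Obj} (f : (G.obj 0).Hom x x') :
    (H.obj 0).Hom (F.objD x) (F.objD x') := (F.app 0).map1 f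

/-- Image of the 1-morphism part of a descent datum. -/
def mapG (F : CosimplicialMor G H) {x : (G.obj 0).Obj}
    (g : (G.obj 1).Hom (G.X x 1 0) (G.X x 1 1)) :
    (H.obj 1).Hom (H.X (F.objD x) 1 0) (H.X (F.objD x) 1 1) :=
  (H.obj 1).hcast (F.app_X x 1 0) (F.app_X x 1 1) ((F.app 1).map1 g)

/-- Image of the 2-morphism part of a descent datum. -/
def mapA (F : CosimplicialMor G H) {x : (G.obj 0).Obj} (a : (G.obj 2).G2 (G.X x 2 0)) :
    (H.obj 2).G2 (H.X (F.objD x) 2 0) :=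
  (H.obj 2).cast2 (F.app_X x 2 0) ((F.app 2).map2 a)

/-- Image of the 2-morphism part of a gauge transformation. -/
def mapC (F : CosimplicialMor G H) {x : (G.obj 0).Obj} (c : (G.obj 1).G2 (G.X x 1 0)) :
    (H.obj 1).G2 (H.X (F.objD x) 1 0) :=
  (H.obj 1).cast2 (F.app_X x 1 0) ((F.app 1).map2 c)

/-- A weak equivalence of cosimplicial crossed groupoids. -/
def IsWeakEquiv (F : CosimplicialMor G H) : Prop := ∀ p, (F.app p).IsWeakEquiv

end CosimplicialMor

/-! ### Auxiliary lemmas -/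

namespace CrossedGroupoid

instance instGroupG2 (K : CrossedGroupoid) (x : K.Obj) : Group (K.G2 x) where
  mul := K.mul
  one := K.one x
  inv := K.inv2
  mul_assoc := K.mul_assoc
  one_mul := K.one_mul
  mul_one := K.mul_one
  inv_mul_cancel := K.inv2_mul

variable {K : CrossedGroupoid}

theorem inv_unique {x y : K.Obj} {f : K.Hom x y} {h : K.Hom y x}
    (hyp : K.comp h f = K.id x) : h = K.inv f := by
  have h1 : K.comp h (K.comp f (K.inv f)) = K.comp (K.comp h f) (K.inv f) :=
    (K.comp_assoc ..).symm
  rw [K.comp_inv, K.comp_id, hyp, K.id_comp] at h1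
  exact h1

theorem inv_comp' {x y z : K.Obj} (g : K.Hom y z) (f : K.Hom x y) :
    K.inv (K.comp g f) = K.comp (K.inv f) (K.inv g) := by
  refine (inv_unique ?_).symm
  rw [K.comp_assoc, ← K.comp_assoc (K.inv g) g f, K.inv_comp, K.id_comp, K.inv_comp]

theorem inv_inv' {x y : K.Obj} (f : K.Hom x y) : K.inv (K.inv f) = f :=
  (inv_unique (K.comp_inv f)).symm

theorem D_inv2 {x : K.Obj} (a : K.G2 x) : K.D (K.inv2 a) = K.inv (K.D a) := by
  refine inv_unique ?_
  rw [← K.D_mul, K.inv2_mul, K.D_one]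

theorem Ad_inv2' {x y : K.Obj} (g : K.Hom x y) (a : K.G2 x) :
    K.Ad g (K.inv2 a) = K.inv2 (K.Ad g a) := by
  have h1 := K.Ad_mul g (K.inv2 a) a
  rw [K.inv2_mul, K.Ad_one] at h1
  exact eq_inv_of_mul_eq_one_left h1.symm

theorem Ad_inv_Ad {x y : K.Obj} (g : K.Hom x y) (a : K.G2 x) :
    K.Ad (K.inv g) (K.Ad g a) = a := by
  rw [← K.Ad_comp, K.inv_comp, K.Ad_id]

/-- Group-notation restatements (definitionally equal). -/
theorem Ad_mul'' {x y : K.Obj} (g : K.Hom x y) (a b : K.G2 x) :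
    K.Ad g (a * b) = K.Ad g a * K.Ad g b := K.Ad_mul g a b

theorem Ad_inv'' {x y : K.Obj} (g : K.Hom x y) (a : K.G2 x) :
    K.Ad g a⁻¹ = (K.Ad g a)⁻¹ := Ad_inv2' g a

theorem peiffer' {x : K.Obj} (a b : K.G2 x) : K.Ad (K.D a) b = a * b * a⁻¹ := K.peiffer a b

theorem conj_by_inv {x : K.Obj} (a b : K.G2 x) :
    a⁻¹ * b * a = K.Ad (K.inv (K.D a)) b := by
  rw [← D_inv2, peiffer']
  show a⁻¹ * b * a = a⁻¹ * b * a⁻¹⁻¹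
  rw [inv_inv]

theorem core (K : CrossedGroupoid) {v0 v1 v2 w0 w1 : K.Obj}
    (f0 : K.Hom v0 w0) (f1 : K.Hom v1 w1)
    (g01 : K.Hom v0 v1) (g02 : K.Hom v0 v2) (g12 : K.Hom v1 v2)
    (A013 A023 A012 C01 C02 C03 : K.G2 v0) (A123 C12 C13 : K.G2 v1) (C23 : K.G2 v2)
    (hc1 : K.comp (K.comp (K.inv g02) g12) g01 = K.D A012)
    (hc2 : K.mul (K.mul (K.inv2 A013) A023) A012 = K.Ad (K.inv g01) A123) :
    K.mul (K.mul
      (K.inv2 (K.Ad f0 (K.mul (K.mul (K.mul (K.inv2 C03) A013) (K.Ad (K.inv g01) C13)) C01)))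
      (K.Ad f0 (K.mul (K.mul (K.mul (K.inv2 C03) A023) (K.Ad (K.inv g02) C23)) C02)))
      (K.Ad f0 (K.mul (K.mul (K.mul (K.inv2 C02) A012) (K.Ad (K.inv g01) C12)) C01))
    = K.Ad (K.inv (K.comp (K.comp (K.comp f1 g01) (K.D C01)) (K.inv f0)))
        (K.Ad f1 (K.mul (K.mul (K.mul (K.inv2 C13) A123) (K.Ad (K.inv g12) C23)) C12)) := by
  -- simplify the 1-morphism on the right
  have hkey : K.Ad (K.inv g02) C23 * A012
      = A012 * K.Ad (K.inv g01) (K.Ad (K.inv g12) C23) := by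
    have h2 : A012⁻¹ * K.Ad (K.inv g02) C23 * A012
        = K.Ad (K.inv g01) (K.Ad (K.inv g12) C23) := by
      rw [conj_by_inv, ← K.Ad_comp, ← hc1, ← K.Ad_comp,
        inv_comp' (K.comp (K.inv g02) g12) g01, inv_comp' (K.inv g02) g12, inv_inv']
      rw [K.comp_assoc (K.inv g01), K.comp_assoc (K.inv g12),
        K.comp_inv, K.comp_id, K.Ad_comp]
    calc K.Ad (K.inv g02) C23 * A012
        = A012 * (A012⁻¹ * K.Ad (K.inv g02) C23 * A012) := by group
      _ = A012 * K.Ad (K.inv g01) (K.Ad (K.inv g12) C23) := by rw [h2]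
  have hc2' : K.Ad (K.inv g01) A123 = A013⁻¹ * A023 * A012 := hc2.symm
  -- reduce the right-hand side
  rw [inv_comp', inv_comp', inv_comp', inv_inv', K.Ad_comp, K.Ad_comp, K.Ad_comp, Ad_inv_Ad]
  show (K.Ad f0 (C03⁻¹ * A013 * K.Ad (K.inv g01) C13 * C01))⁻¹
      * K.Ad f0 (C03⁻¹ * A023 * K.Ad (K.inv g02) C23 * C02)
      * K.Ad f0 (C02⁻¹ * A012 * K.Ad (K.inv g01) C12 * C01)
    = K.Ad f0 (K.Ad (K.inv (K.D C01))
        (K.Ad (K.inv g01) (C13⁻¹ * A123 * K.Ad (K.inv g12) C23 * C12)))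
  rw [← Ad_inv'', ← Ad_mul'', ← Ad_mul'']
  congr 1
  rw [← conj_by_inv]
  rw [Ad_mul'', Ad_mul'', Ad_mul'', Ad_inv'', hc2']
  calc (C03⁻¹ * A013 * K.Ad (K.inv g01) C13 * C01)⁻¹
      * (C03⁻¹ * A023 * K.Ad (K.inv g02) C23 * C02)
      * (C02⁻¹ * A012 * K.Ad (K.inv g01) C12 * C01)
      = C01⁻¹ * (K.Ad (K.inv g01) C13)⁻¹ * A013⁻¹ * A023
        * (K.Ad (K.inv g02) C23 * A012) * K.Ad (K.inv g01) C12 * C01 := by group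
    _ = C01⁻¹ * (K.Ad (K.inv g01) C13)⁻¹ * A013⁻¹ * A023
        * (A012 * K.Ad (K.inv g01) (K.Ad (K.inv g12) C23)) * K.Ad (K.inv g01) C12 * C01 := by
        rw [hkey]
    _ = C01⁻¹ * ((K.Ad (K.inv g01) C13)⁻¹ * (A013⁻¹ * A023 * A012)
        * K.Ad (K.inv g01) (K.Ad (K.inv g12) C23) * K.Ad (K.inv g01) C12) * C01 := by group
end CrossedGroupoid

namespace CrossedGroupoid

variable {K : CrossedGroupoid}

theorem cast2_mul {x x' : K.Obj} (e : x = x') (a b : K.G2 x) :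
    K.cast2 e (K.mul a b) = K.mul (K.cast2 e a) (K.cast2 e b) := by subst e; rfl

theorem cast2_inv2 {x x' : K.Obj} (e : x = x') (a : K.G2 x) :
    K.cast2 e (K.inv2 a) = K.inv2 (K.cast2 e a) := by subst e; rfl

theorem cast2_cast2 {x x' x'' : K.Obj} (e : x = x') (e' : x' = x'') (a : K.G2 x) :
    K.cast2 e' (K.cast2 e a) = K.cast2 (e.trans e') a := by subst e; subst e'; rfl

theorem cast2_irrel {x x' : K.Obj} (e e' : x = x') (a : K.G2 x) :
    K.cast2 e a = K.cast2 e' a := by rw [Subsingleton.elim e e']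

theorem hcast_hcast {x x' x'' y y' y'' : K.Obj} (e1 : x = x') (e2 : x' = x'')
    (f1 : y = y') (f2 : y' = y'') (g : K.Hom x y) :
    K.hcast e2 f2 (K.hcast e1 f1 g) = K.hcast (e1.trans e2) (f1.trans f2) g := by
  subst e1; subst e2; subst f1; subst f2; rfl

theorem hcast_irrel {x x' y y' : K.Obj} (e e' : x = x') (f f' : y = y') (g : K.Hom x y) :
    K.hcast e f g = K.hcast e' f' g := by
  rw [Subsingleton.elim e e', Subsingleton.elim f f']

theorem hcast_comp {x x' y y' z z' : K.Obj} (ex : x = x') (ey : y = y') (ez : z = z')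
    (g : K.Hom y z) (f : K.Hom x y) :
    K.hcast ex ez (K.comp g f) = K.comp (K.hcast ey ez g) (K.hcast ex ey f) := by
  subst ex; subst ey; subst ez; rfl

theorem hcast_inv {x x' y y' : K.Obj} (ex : x = x') (ey : y = y') (f : K.Hom x y) :
    K.hcast ey ex (K.inv f) = K.inv (K.hcast ex ey f) := by subst ex; subst ey; rfl

theorem hcast_D {x x' : K.Obj} (e : x = x') (a : K.G2 x) :
    K.hcast e e (K.D a) = K.D (K.cast2 e a) := by subst e; rfl

theorem cast2_Ad {x x' y y' : K.Obj} (ex : x = x') (ey : y = y') (g : K.Hom x y)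
    (a : K.G2 x) : K.cast2 ey (K.Ad g a) = K.Ad (K.hcast ex ey g) (K.cast2 ex a) := by
  subst ex; subst ey; rfl

end CrossedGroupoid

namespace CrossedGroupoidHom

theorem map2_cast2 {G H : CrossedGroupoid} (F : CrossedGroupoidHom G H) {x x' : G.Obj}
    (e : x = x') (a : G.G2 x) :
    F.map2 (G.cast2 e a) = H.cast2 (congrArg F.obj e) (F.map2 a) := by subst e; rfl

theorem map1_hcast {G H : CrossedGroupoid} (F : CrossedGroupoidHom G H) {x x' y y' : G.Obj}
    (ex : x = x') (ey : y = y') (f : G.Hom x y) :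
    F.map1 (G.hcast ex ey f) =
      H.hcast (congrArg F.obj ex) (congrArg F.obj ey) (F.map1 f) := by
  subst ex; subst ey; rfl

theorem map2_one {G H : CrossedGroupoid} (F : CrossedGroupoidHom G H) (x : G.Obj) :
    F.map2 (G.one x) = H.one (F.obj x) := by
  have h3 := F.map2_mul (G.one x) (G.one x)
  rw [G.one_mul] at h3
  have h4 : F.map2 (G.one x) * F.map2 (G.one x) = 1 * F.map2 (G.one x) := by
    rw [one_mul]; exact h3.symm
  exact mul_right_cancel h4

theorem map2_inv2 {G H : CrossedGroupoid} (F : CrossedGroupoidHom G H) {x : G.Obj}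
    (a : G.G2 x) : F.map2 (G.inv2 a) = H.inv2 (F.map2 a) := by
  have h1 := F.map2_mul (G.inv2 a) a
  rw [G.inv2_mul, F.map2_one] at h1
  exact eq_inv_of_mul_eq_one_left h1.symm

theorem map1_inv {G H : CrossedGroupoid} (F : CrossedGroupoidHom G H) {x y : G.Obj}
    (f : G.Hom x y) : F.map1 (G.inv f) = H.inv (F.map1 f) := by
  refine CrossedGroupoid.inv_unique ?_
  rw [← F.map1_comp, G.inv_comp, F.map1_id]

theorem map2_eq_of_eq {G H : CrossedGroupoid} {F F' : CrossedGroupoidHom G H} (h : F = F')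
    {z : G.Obj} (a : G.G2 z) (e : F.obj z = F'.obj z) :
    F'.map2 a = H.cast2 e (F.map2 a) := by
  subst h
  have : e = rfl := Subsingleton.elim _ _
  subst this; rfl

theorem map1_eq_of_eq {G H : CrossedGroupoid} {F F' : CrossedGroupoidHom G H} (h : F = F')
    {z w : G.Obj} (f : G.Hom z w) (e1 : F.obj z = F'.obj z) (e2 : F.obj w = F'.obj w) :
    F'.map1 f = H.hcast e1 e2 (F.map1 f) := by
  subst h
  have h1 : e1 = rfl := Subsingleton.elim _ _
  have h2 : e2 = rfl := Subsingleton.elim _ _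
  subst h1; subst h2; rfl

end CrossedGroupoidHom

namespace CosimplicialCrossedGroupoid

variable (G : CosimplicialCrossedGroupoid)

/-- Pushing a 1-morphism between vertex objects over possibly different bases. -/
def push1g {x₁ x₂ : (G.obj 0).Obj} {p q : ℕ} (α : Fin (p + 1) →o Fin (q + 1))
    {i j : Fin (p + 1)} (g : (G.obj p).Hom (G.X x₁ p i) (G.X x₂ p j)) :
    (G.obj q).Hom (G.X x₁ q (α i)) (G.X x₂ q (α j)) :=
  (G.obj q).hcast (G.X_push x₁ α i) (G.X_push x₂ α j) ((G.map α).map1 g)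

variable {G}
variable {x x₁ x₂ x₃ : (G.obj 0).Obj} {p q : ℕ}

theorem push1_eq_push1g (α : Fin (p + 1) →o Fin (q + 1)) {i j : Fin (p + 1)}
    (g : (G.obj p).Hom (G.X x p i) (G.X x p j)) : G.push1 α g = G.push1g α g := rfl

theorem push1g_comp (α : Fin (p + 1) →o Fin (q + 1)) {i j k : Fin (p + 1)}
    (g : (G.obj p).Hom (G.X x₂ p j) (G.X x₃ p k))
    (f : (G.obj p).Hom (G.X x₁ p i) (G.X x₂ p j)) :
    G.push1g α ((G.obj p).comp g f) = (G.obj q).comp (G.push1g α g) (G.push1g α f) := by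
  unfold push1g
  rw [(G.map α).map1_comp, CrossedGroupoid.hcast_comp _ (G.X_push x₂ α j)]

theorem push1g_inv (α : Fin (p + 1) →o Fin (q + 1)) {i j : Fin (p + 1)}
    (f : (G.obj p).Hom (G.X x₁ p i) (G.X x₂ p j)) :
    G.push1g α ((G.obj p).inv f) = (G.obj q).inv (G.push1g α f) := by
  unfold push1g
  rw [(G.map α).map1_inv, CrossedGroupoid.hcast_inv]

theorem push1g_D (α : Fin (p + 1) →o Fin (q + 1)) {i : Fin (p + 1)}
    (a : (G.obj p).G2 (G.X x p i)) :
    G.push1g α ((G.obj p).D a) = (G.obj q).D (G.push2 α a) := by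
  unfold push1g push2
  rw [(G.map α).map_D, CrossedGroupoid.hcast_D]

theorem push2_mul (α : Fin (p + 1) →o Fin (q + 1)) {i : Fin (p + 1)}
    (a b : (G.obj p).G2 (G.X x p i)) :
    G.push2 α ((G.obj p).mul a b) = (G.obj q).mul (G.push2 α a) (G.push2 α b) := by
  unfold push2
  rw [(G.map α).map2_mul, CrossedGroupoid.cast2_mul]

theorem push2_inv2 (α : Fin (p + 1) →o Fin (q + 1)) {i : Fin (p + 1)}
    (a : (G.obj p).G2 (G.X x p i)) :
    G.push2 α ((G.obj p).inv2 a) = (G.obj q).inv2 (G.push2 α a) := by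
  unfold push2
  rw [(G.map α).map2_inv2, CrossedGroupoid.cast2_inv2]

theorem push2_Ad (α : Fin (p + 1) →o Fin (q + 1)) {i j : Fin (p + 1)}
    (g : (G.obj p).Hom (G.X x₁ p i) (G.X x₂ p j)) (a : (G.obj p).G2 (G.X x₁ p i)) :
    G.push2 α ((G.obj p).Ad g a) = (G.obj q).Ad (G.push1g α g) (G.push2 α a) := by
  unfold push2 push1g
  rw [(G.map α).map_Ad, CrossedGroupoid.cast2_Ad (G.X_push x₁ α i)]

theorem push2_push2 {r : ℕ} (β : Fin (q + 1) →o Fin (r + 1)) (α : Fin (p + 1) →o Fin (q + 1))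
    {i : Fin (p + 1)} (a : (G.obj p).G2 (G.X x p i)) :
    G.push2 β (G.push2 α a) = G.push2 (β.comp α) a := by
  unfold push2
  rw [(G.map β).map2_cast2, CrossedGroupoid.cast2_cast2]
  have h := CrossedGroupoidHom.map2_eq_of_eq (G.map_comp β α).symm a
    (show ((G.map β).comp (G.map α)).obj (G.X x p i) = (G.map (β.comp α)).obj (G.X x p i)
      by rw [G.map_comp])
  rw [h, CrossedGroupoid.cast2_cast2]
  exact CrossedGroupoid.cast2_irrel _ _ _

theorem push1g_push1g {r : ℕ} (β : Fin (q + 1) →o Fin (r + 1)) (α : Fin (p + 1) →o Fin (q + 1))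
    {i j : Fin (p + 1)} (g : (G.obj p).Hom (G.X x₁ p i) (G.X x₂ p j)) :
    G.push1g β (G.push1g α g) = G.push1g (β.comp α) g := by
  unfold push1g
  rw [(G.map β).map1_hcast, CrossedGroupoid.hcast_hcast]
  have h := CrossedGroupoidHom.map1_eq_of_eq (G.map_comp β α).symm g
    (show ((G.map β).comp (G.map α)).obj (G.X x₁ p i) = (G.map (β.comp α)).obj (G.X x₁ p i)
      by rw [G.map_comp])
    (show ((G.map β).comp (G.map α)).obj (G.X x₂ p j) = (G.map (β.comp α)).obj (G.X x₂ p j)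
      by rw [G.map_comp])
  rw [h, CrossedGroupoid.hcast_hcast]
  exact CrossedGroupoid.hcast_irrel _ _ _ _ _

end CosimplicialCrossedGroupoid

section Combinatorics

theorem triMap_comp_edge01 {q : ℕ} (i j k : Fin (q + 1)) (hij : i ≤ j) (hjk : j ≤ k) :
    (triMap i j k hij hjk).comp (edgeMap 0 1 (by decide)) = edgeMap i j hij := by
  apply OrderHom.ext; funext m; fin_cases m <;> rfl

theorem triMap_comp_edge02 {q : ℕ} (i j k : Fin (q + 1)) (hij : i ≤ j) (hjk : j ≤ k) :
    (triMap i j k hij hjk).comp (edgeMap 0 2 (by decide)) = edgeMap i k (hij.trans hjk) := by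
  apply OrderHom.ext; funext m; fin_cases m <;> rfl

theorem triMap_comp_edge12 {q : ℕ} (i j k : Fin (q + 1)) (hij : i ≤ j) (hjk : j ≤ k) :
    (triMap i j k hij hjk).comp (edgeMap 1 2 (by decide)) = edgeMap j k hjk := by
  apply OrderHom.ext; funext m; fin_cases m <;> rfl

theorem triMap_apply0 {q : ℕ} (i j k : Fin (q + 1)) (hij : i ≤ j) (hjk : j ≤ k) :
    (triMap i j k hij hjk) 0 = i := rfl

theorem edgeMap_apply0 {q : ℕ} (i j : Fin (q + 1)) (h : i ≤ j) : (edgeMap i j h) 0 = i := rfl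

theorem edgeMap_apply1 {q : ℕ} (i j : Fin (q + 1)) (h : i ≤ j) : (edgeMap i j h) 1 = j := rfl

end Combinatorics

namespace CosimplicialCrossedGroupoid

variable {G : CosimplicialCrossedGroupoid} {x x' : (G.obj 0).Obj} {p q : ℕ}

theorem push1g_vtx (α : Fin (p + 1) →o Fin (q + 1)) (i : Fin (p + 1))
    (f : (G.obj 0).Hom x x') :
    G.push1g α ((G.map (vtxMap i)).map1 f) = (G.map (vtxMap (α i))).map1 f := by
  unfold push1g
  have h := CrossedGroupoidHom.map1_eq_of_eq
    (F := (G.map α).comp (G.map (vtxMap i))) (F' := G.map (vtxMap (α i)))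
    (by rw [← G.map_comp, comp_vtxMap]) f
    (show ((G.map α).comp (G.map (vtxMap i))).obj x = (G.map (vtxMap (α i))).obj x
      by rw [← G.map_comp, comp_vtxMap])
    (show ((G.map α).comp (G.map (vtxMap i))).obj x' = (G.map (vtxMap (α i))).obj x'
      by rw [← G.map_comp, comp_vtxMap])
  rw [h]
  exact CrossedGroupoid.hcast_irrel _ _ _ _ _

theorem push2_transportA (α : Fin 3 →o Fin (q + 1)) (f : (G.obj 0).Hom x x')
    (g : (G.obj 1).Hom (G.X x 1 0) (G.X x 1 1))
    (a : (G.obj 2).G2 (G.X x 2 0)) (c : (G.obj 1).G2 (G.X x 1 0)) :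
    G.push2 α (G.transportA f g a c)
      = (G.obj q).Ad ((G.map (vtxMap (α 0))).map1 f)
        ((G.obj q).mul ((G.obj q).mul ((G.obj q).mul
            ((G.obj q).inv2 (G.push2 (α.comp (edgeMap 0 2 (by decide))) c))
            (G.push2 α a))
            ((G.obj q).Ad ((G.obj q).inv (G.push1g (α.comp (edgeMap 0 1 (by decide))) g))
              (G.push2 (α.comp (edgeMap 1 2 (by decide))) c)))
          (G.push2 (α.comp (edgeMap 0 1 (by decide))) c)) := by
  unfold transportA
  erw [push2_Ad, push1g_vtx, push2_mul, push2_mul, push2_mul, push2_inv2, push2_Ad,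
    push1g_inv, push1_eq_push1g, push1g_push1g, push2_push2, push2_push2, push2_push2]
  rfl

end CosimplicialCrossedGroupoid

namespace CosimplicialCrossedGroupoid

variable {G : CosimplicialCrossedGroupoid} {x x₁ x₂ : (G.obj 0).Obj} {p q : ℕ}

theorem push2_ocongr {α β : Fin (p + 1) →o Fin (q + 1)} (h : α = β) {i : Fin (p + 1)}
    (a : (G.obj p).G2 (G.X x p i)) : HEq (G.push2 α a) (G.push2 β a) := by subst h; rfl

theorem push1g_ocongr {α β : Fin (p + 1) →o Fin (q + 1)} (h : α = β) {i j : Fin (p + 1)}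
    (g : (G.obj p).Hom (G.X x₁ p i) (G.X x₂ p j)) :
    HEq (G.push1g α g) (G.push1g β g) := by subst h; rfl

variable {i j k : Fin (q + 1)}

theorem push2_tri_e01 (hij : i ≤ j) (hjk : j ≤ k) (w : (G.obj 1).G2 (G.X x 1 0)) :
    G.push2 ((triMap i j k hij hjk).comp (edgeMap 0 1 (by decide))) w
      = G.push2 (edgeMap i j hij) w :=
  eq_of_heq (push2_ocongr (triMap_comp_edge01 i j k hij hjk) w)

theorem push2_tri_e02 (hij : i ≤ j) (hjk : j ≤ k) (w : (G.obj 1).G2 (G.X x 1 0)) :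
    G.push2 ((triMap i j k hij hjk).comp (edgeMap 0 2 (by decide))) w
      = G.push2 (edgeMap i k (hij.trans hjk)) w :=
  eq_of_heq (push2_ocongr (triMap_comp_edge02 i j k hij hjk) w)

theorem push2_tri_e12 (hij : i ≤ j) (hjk : j ≤ k) (w : (G.obj 1).G2 (G.X x 1 0)) :
    G.push2 ((triMap i j k hij hjk).comp (edgeMap 1 2 (by decide))) w
      = G.push2 (edgeMap j k hjk) w :=
  eq_of_heq (push2_ocongr (triMap_comp_edge12 i j k hij hjk) w)

theorem push1g_tri_e01 (hij : i ≤ j) (hjk : j ≤ k)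
    (w : (G.obj 1).Hom (G.X x₁ 1 0) (G.X x₂ 1 1)) :
    G.push1g ((triMap i j k hij hjk).comp (edgeMap 0 1 (by decide))) w
      = G.push1g (edgeMap i j hij) w :=
  eq_of_heq (push1g_ocongr (triMap_comp_edge01 i j k hij hjk) w)

theorem push1g_tri_e02 (hij : i ≤ j) (hjk : j ≤ k)
    (w : (G.obj 1).Hom (G.X x₁ 1 0) (G.X x₂ 1 1)) :
    G.push1g ((triMap i j k hij hjk).comp (edgeMap 0 2 (by decide))) w
      = G.push1g (edgeMap i k (hij.trans hjk)) w :=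
  eq_of_heq (push1g_ocongr (triMap_comp_edge02 i j k hij hjk) w)

theorem push1g_tri_e12 (hij : i ≤ j) (hjk : j ≤ k)
    (w : (G.obj 1).Hom (G.X x₁ 1 0) (G.X x₂ 1 1)) :
    G.push1g ((triMap i j k hij hjk).comp (edgeMap 1 2 (by decide))) w
      = G.push1g (edgeMap j k hjk) w :=
  eq_of_heq (push1g_ocongr (triMap_comp_edge12 i j k hij hjk) w)

end CosimplicialCrossedGroupoid
/-- the twisted 2-cocycle condition holds for the transported
datum (x', g', a') with a' := transportA f g a c. -/
theorem transport_cocycle2 (G : CosimplicialCrossedGroupoid) (P : G.Desc)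
    (x' : (G.obj 0).Obj) (g' : (G.obj 1).Hom (G.X x' 1 0) (G.X x' 1 1))
    (f : (G.obj 0).Hom P.x x') (c : (G.obj 1).G2 (G.X P.x 1 0))
    (hpartial : g' = (G.obj 1).comp ((G.obj 1).comp ((G.obj 1).comp
      ((G.map (vtxMap (1 : Fin 2))).map1 f) P.g) ((G.obj 1).D c))
      ((G.obj 1).inv ((G.map (vtxMap (0 : Fin 2))).map1 f))) :
    (G.obj 3).mul ((G.obj 3).mul
        ((G.obj 3).inv2 (G.push2 (triMap 0 1 3 (by decide) (by decide))
          (G.transportA f P.g P.a c)))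
        (G.push2 (triMap 0 2 3 (by decide) (by decide)) (G.transportA f P.g P.a c)))
      (G.push2 (triMap 0 1 2 (by decide) (by decide)) (G.transportA f P.g P.a c))
      = (G.obj 3).Ad ((G.obj 3).inv (G.push1 (edgeMap 0 1 (by decide)) g'))
        (G.push2 (triMap 1 2 3 (by decide) (by decide)) (G.transportA f P.g P.a c)) := by
  have h1 := congrArg (G.push1g (triMap (0 : Fin 4) 1 2 (by decide) (by decide)))
    P.isDescent.1
  erw [CosimplicialCrossedGroupoid.push1g_comp, CosimplicialCrossedGroupoid.push1g_comp,
    CosimplicialCrossedGroupoid.push1g_inv, CosimplicialCrossedGroupoid.push1g_D,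
    CosimplicialCrossedGroupoid.push1_eq_push1g, CosimplicialCrossedGroupoid.push1_eq_push1g,
    CosimplicialCrossedGroupoid.push1_eq_push1g,
    CosimplicialCrossedGroupoid.push1g_push1g, CosimplicialCrossedGroupoid.push1g_push1g,
    CosimplicialCrossedGroupoid.push1g_push1g,
    CosimplicialCrossedGroupoid.push1g_tri_e01, CosimplicialCrossedGroupoid.push1g_tri_e02,
    CosimplicialCrossedGroupoid.push1g_tri_e12] at h1
  rw [hpartial]
  rw [CosimplicialCrossedGroupoid.push2_transportA, CosimplicialCrossedGroupoid.push2_transportA,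
    CosimplicialCrossedGroupoid.push2_transportA, CosimplicialCrossedGroupoid.push2_transportA]
  rw [CosimplicialCrossedGroupoid.push2_tri_e01, CosimplicialCrossedGroupoid.push2_tri_e01,
    CosimplicialCrossedGroupoid.push2_tri_e01, CosimplicialCrossedGroupoid.push2_tri_e01]
  rw [CosimplicialCrossedGroupoid.push2_tri_e02, CosimplicialCrossedGroupoid.push2_tri_e02,
    CosimplicialCrossedGroupoid.push2_tri_e02, CosimplicialCrossedGroupoid.push2_tri_e02]
  rw [CosimplicialCrossedGroupoid.push2_tri_e12, CosimplicialCrossedGroupoid.push2_tri_e12,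
    CosimplicialCrossedGroupoid.push2_tri_e12, CosimplicialCrossedGroupoid.push2_tri_e12]
  erw [CosimplicialCrossedGroupoid.push1_eq_push1g,
    CosimplicialCrossedGroupoid.push1g_tri_e01, CosimplicialCrossedGroupoid.push1g_tri_e01,
    CosimplicialCrossedGroupoid.push1g_tri_e01, CosimplicialCrossedGroupoid.push1g_tri_e01]
  erw [CosimplicialCrossedGroupoid.push1g_comp, CosimplicialCrossedGroupoid.push1g_comp,
    CosimplicialCrossedGroupoid.push1g_comp, CosimplicialCrossedGroupoid.push1g_inv,
    CosimplicialCrossedGroupoid.push1g_D, CosimplicialCrossedGroupoid.push1g_vtx,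
    CosimplicialCrossedGroupoid.push1g_vtx]
  exact CrossedGroupoid.core (G.obj 3) _ _ _ _ _ _ _ _ _ _ _ _ _ _ _ h1 P.isDescent.2
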